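/- Fix p ∈ (0,1) and ε ∈ (0, 1/2). For each r ≥ 1 along a sequence with r → ∞, set a = r^{p−1}, and let x^{◦,a} ∈ ℝ^K have all coordinates positive and satisfy: (i) |Σ_{k∈K} k_i x^{◦,a}_k − ρ_i| ≤ r^{−1/2+ε}/|I| for all i ∈ I and all sufficiently large r; and (ii) χ_{k,k',i}(x^{◦,a}) → 0 as r → ∞ for every pair of edges (k,i), (k',i) ∈ M. Then L^(a)(x^{◦,a}) → L* as r → ∞, where L* is the optimal value of (LP). -/

import Mathlib

open Finset Filter

/-- `c_k = ∏_i (k_i)!`. -/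
noncomputable def confC {I : Type*} [Fintype I] (k : I → ℕ) : ℝ :=
  ∏ i, (Nat.factorial (k i) : ℝ)

/-- The Lyapunov function `L^(a)`. -/
noncomputable def Lfun {I : Type*} [Fintype I] [DecidableEq I]
    (Kbar : Finset (I → ℕ)) (a : ℝ) (x : (I → ℕ) → ℝ) : ℝ :=
  -(1 / Real.log a) *
    ∑ k ∈ Kbar.erase 0, x k * Real.log (x k * confC k / (Real.exp 1 * a))

/-- The coordinates of `x` extended by the convention `x_0 = a`. -/
def xeDef {I : Type*} [Fintype I]
    (a : ℝ) (x : (I → ℕ) → ℝ) (m : I → ℕ) : ℝ :=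
  if m = 0 then a else x m

/-- `χ_{k,k',i}(x) = log(k'_i x_{k−e_i} x_{k'}) − log(k_i x_k x_{k'−e_i})`,
with the convention `x_0 = a`. -/
noncomputable def chiDef {I : Type*} [Fintype I] [DecidableEq I]
    (a : ℝ) (x : (I → ℕ) → ℝ) (k k' : I → ℕ) (i : I) : ℝ :=
  Real.log ((k' i : ℝ) * xeDef a x (k - Pi.single i 1) * xeDef a x k')
    - Real.log ((k i : ℝ) * xeDef a x k * xeDef a x (k' - Pi.single i 1))

/-- `(k, i)` is an edge: `k ∈ K`, `k_i ≥ 1` and `k − e_i ∈ K̄`. -/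
def isEdge {I : Type*} [Fintype I] [DecidableEq I]
    (Kbar : Finset (I → ℕ)) (k : I → ℕ) (i : I) : Prop :=
  k ∈ Kbar.erase 0 ∧ 1 ≤ k i ∧ k - Pi.single i 1 ∈ Kbar

/-- The optimal value `L*` of the linear program (LP). -/
noncomputable def LPvalue {I : Type*} [Fintype I] [DecidableEq I]
    (Kbar : Finset (I → ℕ)) (ρ : I → ℝ) : ℝ :=
  sInf {v : ℝ | ∃ x : (I → ℕ) → ℝ,
    ((∀ k ∈ Kbar.erase 0, 0 ≤ x k) ∧
      ∀ i : I, ∑ k ∈ Kbar.erase 0, (k i : ℝ) * x k = ρ i) ∧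
    v = ∑ k ∈ Kbar.erase 0, x k}


lemma binom_sum_one (n N : ℕ) (hN : n ≤ N) (t : ℝ) :
    ∑ m ∈ range (N+1), (n.choose m : ℝ) * t ^ m * (1 - t) ^ (n - m) = 1 := by
  have h0 := add_pow t (1 - t) n
  simp only [add_sub_cancel, one_pow] at h0
  have h1 : ∑ m ∈ range (n+1), (n.choose m : ℝ) * t ^ m * (1 - t) ^ (n - m) = 1 := by
    rw [show ∑ m ∈ range (n+1), (n.choose m : ℝ) * t ^ m * (1 - t) ^ (n - m)
        = ∑ m ∈ range (n+1), t ^ m * (1 - t) ^ (n - m) * (n.choose m : ℝ) from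
      Finset.sum_congr rfl fun m _ => by ring, ← h0]
  calc ∑ m ∈ range (N+1), (n.choose m : ℝ) * t ^ m * (1 - t) ^ (n - m)
      = ∑ m ∈ range (n+1), (n.choose m : ℝ) * t ^ m * (1 - t) ^ (n - m) := by
        symm
        apply Finset.sum_subset (Finset.range_subset_range.2 (by omega))
        intro m hm hm'
        simp only [Finset.mem_range] at hm hm'
        simp [Nat.choose_eq_zero_of_lt (show n < m by omega)]
    _ = 1 := h1

lemma binom_sum_mean (n N : ℕ) (hN : n ≤ N) (t : ℝ) :
    ∑ m ∈ range (N+1), (m : ℝ) * ((n.choose m : ℝ) * t ^ m * (1 - t) ^ (n - m)) = n * t := by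
  cases n with
  | zero =>
    rw [Finset.sum_eq_single 0]
    · simp
    · intro m hm hm0
      simp [Nat.choose_eq_zero_of_lt (Nat.pos_of_ne_zero hm0)]
    · simp
  | succ n' =>
    rw [Finset.sum_range_succ']
    simp only [Nat.cast_zero, zero_mul, add_zero]
    have key : ∀ j : ℕ, ((j+1 : ℕ) : ℝ) * (((n'+1).choose (j+1) : ℝ) * t ^ (j+1) * (1 - t) ^ (n'+1 - (j+1)))
        = ((n'+1) : ℝ) * t * ((n'.choose j : ℝ) * t ^ j * (1 - t) ^ (n' - j)) := by
      intro j
      have h := Nat.add_one_mul_choose_eq n' j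
      have hc : ((j+1 : ℕ) : ℝ) * ((n'+1).choose (j+1) : ℝ) = ((n'+1 : ℕ) : ℝ) * (n'.choose j : ℝ) := by
        rw [← Nat.cast_mul, ← Nat.cast_mul, mul_comm (j+1)]
        exact_mod_cast congrArg (Nat.cast (R := ℝ)) h.symm
      have hsub : n' + 1 - (j + 1) = n' - j := by omega
      rw [hsub]
      push_cast at hc ⊢
      linear_combination (t ^ j * (1 - t) ^ (n' - j) * t) * hc
    calc ∑ j ∈ range N, ((j+1 : ℕ) : ℝ) * (((n'+1).choose (j+1) : ℝ) * t ^ (j+1) * (1 - t) ^ (n'+1 - (j+1)))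
        = ∑ j ∈ range N, ((n'+1) : ℝ) * t * ((n'.choose j : ℝ) * t ^ j * (1 - t) ^ (n' - j)) :=
          Finset.sum_congr rfl fun j _ => key j
      _ = ((n'+1) : ℝ) * t * ∑ j ∈ range N, ((n'.choose j : ℝ) * t ^ j * (1 - t) ^ (n' - j)) := by
          rw [Finset.mul_sum]
      _ = ((n'+1 : ℕ) : ℝ) * t := by
          obtain ⟨N', rfl⟩ : ∃ N', N = N' + 1 := ⟨N - 1, by omega⟩
          rw [binom_sum_one n' N' (by omega) t, mul_one]
          push_cast; ring

lemma thin_lemma {I : Type*} [Fintype I] [DecidableEq I]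
    (Kbar : Finset (I → ℕ))
    (hmono : ∀ k ∈ Kbar, ∀ k' : I → ℕ, (∀ i, k' i ≤ k i) → k' ∈ Kbar)
    (x : (I → ℕ) → ℝ) (hx : ∀ k ∈ Kbar.erase 0, 0 ≤ x k)
    (τ : I → ℝ) (hτ : ∀ i, 0 < τ i)
    (hτle : ∀ i, τ i ≤ ∑ k ∈ Kbar.erase 0, (k i : ℝ) * x k) :
    ∃ y : (I → ℕ) → ℝ, (∀ k ∈ Kbar.erase 0, 0 ≤ y k) ∧
      (∀ i, ∑ k ∈ Kbar.erase 0, (k i : ℝ) * y k = τ i) ∧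
      ∑ k ∈ Kbar.erase 0, y k ≤ ∑ k ∈ Kbar.erase 0, x k := by
  classical
  set K := Kbar.erase 0 with hK
  set s : I → ℝ := fun i => ∑ k ∈ K, (k i : ℝ) * x k with hs_def
  have hs : ∀ i, 0 < s i := fun i => lt_of_lt_of_le (hτ i) (hτle i)
  set t : I → ℝ := fun i => τ i / s i with ht_def
  have ht0 : ∀ i, 0 ≤ t i := fun i => le_of_lt (div_pos (hτ i) (hs i))
  have ht1 : ∀ i, t i ≤ 1 := fun i => (div_le_one (hs i)).2 (hτle i)
  have ht1' : ∀ i, 0 ≤ 1 - t i := fun i => by linarith [ht1 i]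
  set N : ℕ := Kbar.sup (fun k => Finset.univ.sup k) with hN_def
  have hkN : ∀ k ∈ Kbar, ∀ j, k j ≤ N := by
    intro k hk j
    exact le_trans (Finset.le_sup (Finset.mem_univ j)) (Finset.le_sup hk)
  set B : Finset (I → ℕ) := Fintype.piFinset (fun _ => Finset.range (N+1)) with hB_def
  have hKB : ∀ k ∈ Kbar, k ∈ B := by
    intro k hk
    rw [Fintype.mem_piFinset]
    intro j; rw [Finset.mem_range]; exact Nat.lt_succ_of_le (hkN k hk j)
  set w : (I → ℕ) → (I → ℕ) → ℝ := fun k k' =>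
    ∏ j, (((k j).choose (k' j) : ℝ) * t j ^ (k' j) * (1 - t j) ^ (k j - k' j)) with hw_def
  have hw0 : ∀ k k', 0 ≤ w k k' := by
    intro k k'
    apply Finset.prod_nonneg
    intro j _
    exact mul_nonneg (mul_nonneg (Nat.cast_nonneg _) (pow_nonneg (ht0 j) _))
      (pow_nonneg (ht1' j) _)
  set y : (I → ℕ) → ℝ := fun k' => ∑ k ∈ K, x k * w k k' with hy_def
  have hy0 : ∀ k', 0 ≤ y k' :=
    fun k' => Finset.sum_nonneg fun k hk => mul_nonneg (hx k hk) (hw0 k k')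
  have hwsum : ∀ k ∈ Kbar, ∑ k' ∈ B, w k k' = 1 := by
    intro k hk
    calc ∑ k' ∈ B, w k k'
        = ∑ k' ∈ B, ∏ j, (((k j).choose (k' j) : ℝ) * t j ^ (k' j) * (1 - t j) ^ (k j - k' j)) :=
          Finset.sum_congr rfl fun _ _ => rfl
      _ = ∏ j, ∑ m ∈ Finset.range (N+1),
            (((k j).choose m : ℝ) * t j ^ m * (1 - t j) ^ (k j - m)) :=
          (Finset.prod_univ_sum (fun _ : I => Finset.range (N+1))
            (fun j m => ((k j).choose m : ℝ) * t j ^ m * (1 - t j) ^ (k j - m))).symm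
      _ = 1 := Finset.prod_eq_one fun j _ => binom_sum_one (k j) N (hkN k hk j) (t j)
  have hwmean : ∀ k ∈ Kbar, ∀ i, ∑ k' ∈ B, ((k' i : ℝ)) * w k k' = (k i : ℝ) * t i := by
    intro k hk i
    have hstep : ∀ k' : I → ℕ, ((k' i : ℝ)) * w k k'
        = ∏ j, ((if j = i then ((k' j : ℝ)) else 1) *
            (((k j).choose (k' j) : ℝ) * t j ^ (k' j) * (1 - t j) ^ (k j - k' j))) := by
      intro k'
      rw [Finset.prod_mul_distrib]
      congr 1
      rw [Finset.prod_ite_eq' Finset.univ i (fun j => ((k' j : ℝ)))]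
      simp
    calc ∑ k' ∈ B, ((k' i : ℝ)) * w k k'
        = ∑ k' ∈ B, ∏ j, ((if j = i then ((k' j : ℝ)) else 1) *
            (((k j).choose (k' j) : ℝ) * t j ^ (k' j) * (1 - t j) ^ (k j - k' j))) :=
          Finset.sum_congr rfl fun k' _ => hstep k'
      _ = ∏ j, ∑ m ∈ Finset.range (N+1), ((if j = i then ((m : ℝ)) else 1) *
            (((k j).choose m : ℝ) * t j ^ m * (1 - t j) ^ (k j - m))) :=
          (Finset.prod_univ_sum (fun _ : I => Finset.range (N+1))
            (fun j m => (if j = i then ((m : ℝ)) else 1) *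
              (((k j).choose m : ℝ) * t j ^ m * (1 - t j) ^ (k j - m)))).symm
      _ = ∏ j, (if j = i then (k i : ℝ) * t i else 1) := by
          apply Finset.prod_congr rfl
          intro j _
          by_cases hji : j = i
          · subst hji
            simp only [if_pos rfl]
            exact binom_sum_mean (k j) N (hkN k hk j) (t j)
          · simp only [if_neg hji, one_mul]
            exact binom_sum_one (k j) N (hkN k hk j) (t j)
      _ = (k i : ℝ) * t i := by
          rw [Finset.prod_ite_eq' Finset.univ i (fun _ => (k i : ℝ) * t i)]
          simp
  have hsupp : ∀ k', k' ∉ Kbar → y k' = 0 := by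
    intro k' hk'
    apply Finset.sum_eq_zero
    intro k hkK
    have hkKbar : k ∈ Kbar := Finset.mem_of_mem_erase hkK
    have : ¬ (∀ j, k' j ≤ k j) := fun h => hk' (hmono k hkKbar k' h)
    push_neg at this
    obtain ⟨j, hj⟩ := this
    have : w k k' = 0 := by
      apply Finset.prod_eq_zero (Finset.mem_univ j)
      rw [Nat.choose_eq_zero_of_lt hj]
      simp
    rw [this, mul_zero]
  have hKsubB : K ⊆ B := fun k hk => hKB k (Finset.mem_of_mem_erase hk)
  refine ⟨y, fun k _ => hy0 k, ?_, ?_⟩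
  · intro i
    have h1 : ∑ k' ∈ K, ((k' i : ℝ)) * y k' = ∑ k' ∈ B, ((k' i : ℝ)) * y k' := by
      apply Finset.sum_subset hKsubB
      intro k' hk'B hk'K
      by_cases h0 : k' = 0
      · subst h0; simp
      · have : k' ∉ Kbar := fun h => hk'K (Finset.mem_erase.2 ⟨h0, h⟩)
        rw [hsupp k' this, mul_zero]
    rw [h1]
    have h2 : ∑ k' ∈ B, ((k' i : ℝ)) * y k' = ∑ k ∈ K, x k * ((k i : ℝ) * t i) := by
      rw [hy_def]
      simp only [Finset.mul_sum]
      rw [Finset.sum_comm]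
      apply Finset.sum_congr rfl
      intro k hk
      rw [← hwmean k (Finset.mem_of_mem_erase hk) i, Finset.mul_sum]
      apply Finset.sum_congr rfl
      intro k' _
      ring
    rw [h2]
    have h3 : ∑ k ∈ K, x k * ((k i : ℝ) * t i) = t i * s i := by
      rw [hs_def, Finset.mul_sum]
      apply Finset.sum_congr rfl
      intro k _; ring
    rw [h3, ht_def]
    simp only []
    rw [div_mul_eq_mul_div, mul_div_assoc, div_self (hs i).ne', mul_one]
  · calc ∑ k' ∈ K, y k' ≤ ∑ k' ∈ B, y k' :=
        Finset.sum_le_sum_of_subset_of_nonneg hKsubB (fun k' _ _ => hy0 k')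
    _ = ∑ k ∈ K, x k * ∑ k' ∈ B, w k k' := by
        rw [hy_def, Finset.sum_comm]
        exact Finset.sum_congr rfl fun k _ => by rw [Finset.mul_sum]
    _ = ∑ k ∈ K, x k := by
        apply Finset.sum_congr rfl
        intro k hk
        rw [hwsum k (Finset.mem_of_mem_erase hk), mul_one]

lemma boost_thin_lemma {I : Type*} [Fintype I] [DecidableEq I]
    (Kbar : Finset (I → ℕ))
    (hunit : ∀ i : I, Pi.single i 1 ∈ Kbar)
    (hmono : ∀ k ∈ Kbar, ∀ k' : I → ℕ, (∀ i, k' i ≤ k i) → k' ∈ Kbar)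
    (x : (I → ℕ) → ℝ) (hx : ∀ k ∈ Kbar.erase 0, 0 ≤ x k)
    (τ : I → ℝ) (hτ : ∀ i, 0 < τ i) :
    ∃ y : (I → ℕ) → ℝ, (∀ k ∈ Kbar.erase 0, 0 ≤ y k) ∧
      (∀ i, ∑ k ∈ Kbar.erase 0, (k i : ℝ) * y k = τ i) ∧
      ∑ k ∈ Kbar.erase 0, y k ≤ ∑ k ∈ Kbar.erase 0, x k
        + ∑ i, max (τ i - ∑ k ∈ Kbar.erase 0, (k i : ℝ) * x k) 0 := by
  classical
  set K := Kbar.erase 0 with hK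
  set s : I → ℝ := fun i => ∑ k ∈ K, (k i : ℝ) * x k with hs_def
  have heK : ∀ i : I, Pi.single i 1 ∈ K := by
    intro i
    refine Finset.mem_erase.2 ⟨?_, hunit i⟩
    intro h
    have := congrFun h i
    simp at this
  set x' : (I → ℕ) → ℝ := fun k =>
    x k + ∑ i, (if k = Pi.single i 1 then max (τ i - s i) 0 else 0) with hx'_def
  have hx'0 : ∀ k ∈ K, 0 ≤ x' k := by
    intro k hk
    apply add_nonneg (hx k hk)
    apply Finset.sum_nonneg
    intro i _
    split <;> simp [le_max_iff]
  have hind : ∀ j : I, ∀ c : I → ℝ,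
      ∑ k ∈ K, (k j : ℝ) * ∑ i, (if k = Pi.single i 1 then c i else 0)
        = ∑ i, ((Pi.single i 1 : I → ℕ) j : ℝ) * c i := by
    intro j c
    calc ∑ k ∈ K, (k j : ℝ) * ∑ i, (if k = Pi.single i 1 then c i else 0)
        = ∑ k ∈ K, ∑ i, (if k = Pi.single i 1 then ((k j : ℝ)) * c i else 0) := by
          apply Finset.sum_congr rfl
          intro k _
          rw [Finset.mul_sum]
          apply Finset.sum_congr rfl
          intro i _
          rw [mul_ite, mul_zero]
      _ = ∑ i, ∑ k ∈ K, (if k = Pi.single i 1 then ((k j : ℝ)) * c i else 0) :=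
          Finset.sum_comm
      _ = ∑ i, ((Pi.single i 1 : I → ℕ) j : ℝ) * c i := by
          apply Finset.sum_congr rfl
          intro i _
          rw [Finset.sum_ite_eq' K (Pi.single i 1) (fun k => ((k j : ℝ)) * c i)]
          rw [if_pos (heK i)]
  have hload : ∀ j, ∑ k ∈ K, (k j : ℝ) * x' k = s j + max (τ j - s j) 0 := by
    intro j
    have : ∀ k ∈ K, (k j : ℝ) * x' k
        = (k j : ℝ) * x k + (k j : ℝ) * ∑ i, (if k = Pi.single i 1 then max (τ i - s i) 0 else 0) := by
      intro k _; rw [hx'_def]; ring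
    rw [Finset.sum_congr rfl this, Finset.sum_add_distrib]
    rw [hind j (fun i => max (τ i - s i) 0)]
    have : ∑ i, ((Pi.single i 1 : I → ℕ) j : ℝ) * max (τ i - s i) 0 = max (τ j - s j) 0 := by
      rw [Finset.sum_eq_single j]
      · simp
      · intro i _ hij
        rw [Pi.single_eq_of_ne' hij]
        simp
      · simp
    rw [this]
  have hτle' : ∀ i, τ i ≤ ∑ k ∈ K, (k i : ℝ) * x' k := by
    intro i
    rw [hload i]
    rcases le_total (τ i) (s i) with h | h
    · rw [max_eq_right (by linarith)]; linarith
    · rw [max_eq_left (by linarith)]; linarith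
  obtain ⟨y, hy0, hyload, hyle⟩ := thin_lemma Kbar hmono x' hx'0 τ hτ hτle'
  refine ⟨y, hy0, hyload, le_trans hyle ?_⟩
  have : ∑ k ∈ K, x' k = ∑ k ∈ K, x k + ∑ i, max (τ i - s i) 0 := by
    rw [hx'_def, Finset.sum_add_distrib]
    congr 1
    rw [Finset.sum_comm]
    apply Finset.sum_congr rfl
    intro i _
    rw [Finset.sum_ite_eq' K (Pi.single i 1) (fun _ => max (τ i - s i) 0)]
    rw [if_pos (heK i)]
  rw [this]


lemma xlogx_abs_bound {B x : ℝ} (hB : 1 ≤ B) (hx0 : 0 ≤ x) (hxB : x ≤ B) :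
    |x * Real.log x| ≤ 1 + B * Real.log B := by
  have hBlog : 0 ≤ B * Real.log B := mul_nonneg (by linarith) (Real.log_nonneg hB)
  rcases eq_or_lt_of_le hx0 with h | h
  · simp [← h]; linarith
  rcases le_or_gt x 1 with h1 | h1
  · have hlog : Real.log x ≤ 0 := Real.log_nonpos hx0 h1  -- check signature
    have hneg : x * Real.log x ≤ 0 := mul_nonpos_of_nonneg_of_nonpos h.le hlog
    rw [abs_of_nonpos hneg]
    have hinv : Real.log x⁻¹ ≤ x⁻¹ - 1 := Real.log_le_sub_one_of_pos (inv_pos.2 h)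
    have : -(x * Real.log x) = x * Real.log x⁻¹ := by rw [Real.log_inv]; ring
    rw [this]
    have : x * Real.log x⁻¹ ≤ x * (x⁻¹ - 1) := by
      apply mul_le_mul_of_nonneg_left hinv h.le
    have hx1 : x * (x⁻¹ - 1) = 1 - x := by field_simp
    nlinarith
  · have hlogpos : 0 ≤ Real.log x := Real.log_nonneg h1.le
    rw [abs_of_nonneg (mul_nonneg h.le hlogpos)]
    have : x * Real.log x ≤ B * Real.log B := by
      apply mul_le_mul hxB (Real.log_le_log (by linarith) hxB) hlogpos (by linarith)
    linarith

lemma xlogxc_term_bound {B c x a : ℝ} (hB : 1 ≤ B) (hc : 1 ≤ c) (ha : 0 < a)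
    (hx0 : 0 ≤ x) (hxB : x ≤ B) :
    |x * Real.log (x * c / (Real.exp 1 * a)) - (-Real.log a) * x| ≤
      1 + (B * c) * Real.log (B * c) + B := by
  have hBc : 1 ≤ B * c := by nlinarith
  rcases eq_or_lt_of_le hx0 with h | h
  · rw [← h]
    simp
    have := Real.log_nonneg hBc
    nlinarith
  · have hxc : x * c ≠ 0 := by positivity
    have hea : Real.exp 1 * a ≠ 0 := by positivity
    have hsplit : Real.log (x * c / (Real.exp 1 * a))
        = Real.log (x * c) - 1 - Real.log a := by
      rw [Real.log_div hxc hea, Real.log_mul (Real.exp_ne_zero 1) ha.ne', Real.log_exp]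
      ring
    rw [hsplit]
    have key : x * (Real.log (x * c) - 1 - Real.log a) - (-Real.log a) * x
        = x * Real.log (x * c) - x := by ring
    rw [key]
    have h1 : |x * Real.log (x * c)| ≤ 1 + (B * c) * Real.log (B * c) := by
      have hb := xlogx_abs_bound (B := B * c) (x := x * c) hBc (by positivity)
        (mul_le_mul_of_nonneg_right hxB (by linarith))
      have hxu : x ≤ x * c := le_mul_of_one_le_right h.le hc
      calc |x * Real.log (x * c)| = x * |Real.log (x * c)| := by
            rw [abs_mul, abs_of_nonneg h.le]
        _ ≤ (x * c) * |Real.log (x * c)| := by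
            exact mul_le_mul_of_nonneg_right hxu (abs_nonneg _)
        _ = |(x * c) * Real.log (x * c)| := by
            rw [abs_mul, abs_of_nonneg (by positivity : (0:ℝ) ≤ x * c)]
        _ ≤ 1 + (B * c) * Real.log (B * c) := hb
    calc |x * Real.log (x * c) - x| ≤ |x * Real.log (x * c)| + |x| := abs_sub _ _
      _ ≤ (1 + (B * c) * Real.log (B * c)) + B := by
          rw [abs_of_nonneg hx0]
          exact add_le_add h1 hxB

lemma conv_ineq {c a xp y : ℝ} (hc : 0 < c) (ha : 0 < a) (hx : 0 < xp) (hy : 0 ≤ y) :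
    xp * Real.log (xp * c / (Real.exp 1 * a)) + Real.log (xp * c / a) * (y - xp)
      ≤ y * Real.log (y * c / (Real.exp 1 * a)) := by
  have hea : Real.exp 1 * a ≠ 0 := by positivity
  have hxc : xp * c ≠ 0 := by positivity
  have hsx : Real.log (xp * c / (Real.exp 1 * a)) = Real.log xp + Real.log c - 1 - Real.log a := by
    rw [Real.log_div hxc hea, Real.log_mul hx.ne' hc.ne',
      Real.log_mul (Real.exp_ne_zero 1) ha.ne', Real.log_exp]; ring
  have hsx2 : Real.log (xp * c / a) = Real.log xp + Real.log c - Real.log a := by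
    rw [Real.log_div hxc ha.ne', Real.log_mul hx.ne' hc.ne']
  rcases eq_or_lt_of_le hy with h | h
  · rw [← h]
    simp [hsx, hsx2]
    nlinarith
  · have hsy : Real.log (y * c / (Real.exp 1 * a)) = Real.log y + Real.log c - 1 - Real.log a := by
      rw [Real.log_div (by positivity) hea, Real.log_mul h.ne' hc.ne',
        Real.log_mul (Real.exp_ne_zero 1) ha.ne', Real.log_exp]; ring
    rw [hsx, hsx2, hsy]
    have key : Real.log xp - Real.log y ≤ xp / y - 1 := by
      rw [← Real.log_div hx.ne' h.ne']
      exact Real.log_le_sub_one_of_pos (div_pos hx h)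
    have key2 : y * (Real.log xp - Real.log y) ≤ xp - y := by
      have := mul_le_mul_of_nonneg_left key h.le
      calc y * (Real.log xp - Real.log y) ≤ y * (xp / y - 1) := this
        _ = xp - y := by field_simp
    nlinarith

lemma confC_pos {I : Type*} [Fintype I] (k : I → ℕ) : 0 < confC k :=
  Finset.prod_pos fun i _ => by exact_mod_cast Nat.factorial_pos (k i)

lemma confC_one_le {I : Type*} [Fintype I] (k : I → ℕ) : 1 ≤ confC k := by
  unfold confC
  calc (1:ℝ) = ∏ _i : I, 1 := by rw [Finset.prod_const_one]
    _ ≤ ∏ i, ((Nat.factorial (k i) : ℝ)) := by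
        apply Finset.prod_le_prod (fun i _ => zero_le_one)
        intro i _
        exact_mod_cast Nat.factorial_pos (k i)

lemma single_sub_single {I : Type*} [Fintype I] [DecidableEq I] (i : I) :
    (Pi.single i 1 : I → ℕ) - Pi.single i 1 = 0 := by
  funext j; simp

lemma single_ne_zero' {I : Type*} [Fintype I] [DecidableEq I] (i : I) :
    (Pi.single i 1 : I → ℕ) ≠ 0 := by
  intro h
  have := congrFun h i
  simp at this

lemma single_le_of_one_le {I : Type*} [Fintype I] [DecidableEq I] {k : I → ℕ} {i : I}
    (hki : 1 ≤ k i) : ∀ j, (Pi.single i 1 : I → ℕ) j ≤ k j := by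
  intro j
  rcases eq_or_ne j i with rfl | hji
  · simpa using hki
  · simp [Pi.single_eq_of_ne hji]

lemma sum_single_one {I : Type*} [Fintype I] [DecidableEq I] (i : I) :
    ∑ j, (Pi.single i 1 : I → ℕ) j = 1 := by
  rw [Finset.sum_pi_single']
  simp

lemma sum_sub_single {I : Type*} [Fintype I] [DecidableEq I] (k : I → ℕ) (i : I)
    (hki : 1 ≤ k i) : ∑ j, (k - Pi.single i 1 : I → ℕ) j = (∑ j, k j) - 1 := by
  calc ∑ j, (k - Pi.single i 1 : I → ℕ) j
      = ∑ j, (k j - (Pi.single i 1 : I → ℕ) j) := rfl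
    _ = (∑ j, k j) - (∑ j, (Pi.single i 1 : I → ℕ) j) :=
        Finset.sum_tsub_distrib Finset.univ (fun j _ => single_le_of_one_le hki j)
    _ = (∑ j, k j) - 1 := by rw [sum_single_one]

lemma sum_cast_sub_single {I : Type*} [Fintype I] [DecidableEq I] (k : I → ℕ) (i : I)
    (hki : 1 ≤ k i) (g : I → ℝ) :
    ∑ j, (((k - Pi.single i 1 : I → ℕ) j : ℝ)) * g j = (∑ j, ((k j : ℝ)) * g j) - g i := by
  have h1 : ∀ j, (((k - Pi.single i 1 : I → ℕ) j : ℝ))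
      = ((k j : ℝ)) - (((Pi.single i 1 : I → ℕ) j : ℝ)) := by
    intro j
    have : (k - Pi.single i 1 : I → ℕ) j = k j - (Pi.single i 1 : I → ℕ) j := rfl
    rw [this, Nat.cast_sub (single_le_of_one_le hki j)]
  calc ∑ j, (((k - Pi.single i 1 : I → ℕ) j : ℝ)) * g j
      = ∑ j, (((k j : ℝ)) * g j - (((Pi.single i 1 : I → ℕ) j : ℝ)) * g j) := by
        apply Finset.sum_congr rfl
        intro j _
        rw [h1 j]; ring
    _ = (∑ j, ((k j : ℝ)) * g j) - ∑ j, (((Pi.single i 1 : I → ℕ) j : ℝ)) * g j :=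
        Finset.sum_sub_distrib _ _
    _ = (∑ j, ((k j : ℝ)) * g j) - g i := by
        congr 1
        rw [Finset.sum_eq_single i]
        · simp
        · intro j _ hji
          rw [Pi.single_eq_of_ne hji]
          simp
        · simp

lemma confC_succ {I : Type*} [Fintype I] [DecidableEq I] (k : I → ℕ) (i : I)
    (hki : 1 ≤ k i) : confC k = (k i : ℝ) * confC (k - Pi.single i 1) := by
  classical
  set k' : I → ℕ := k - Pi.single i 1 with hk'
  have hk'j : ∀ j, j ≠ i → k' j = k j := by
    intro j hji
    have h' : k' j = k j - (Pi.single i 1 : I → ℕ) j := rfl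
    rw [h', Pi.single_eq_of_ne hji]
    omega
  have hk'i : k' i = k i - 1 := by
    have : k' i = k i - (Pi.single i 1 : I → ℕ) i := rfl
    rw [this, Pi.single_eq_same]
  unfold confC
  rw [← Finset.mul_prod_erase Finset.univ (fun j => ((Nat.factorial (k j) : ℝ))) (Finset.mem_univ i),
    ← Finset.mul_prod_erase Finset.univ (fun j => ((Nat.factorial (k' j) : ℝ))) (Finset.mem_univ i)]
  have h1 : ∀ j ∈ Finset.univ.erase i,
      ((Nat.factorial (k' j) : ℝ)) = ((Nat.factorial (k j) : ℝ)) := by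
    intro j hj
    rw [hk'j j (Finset.mem_erase.1 hj).1]
  rw [Finset.prod_congr rfl h1]
  have h2 : (Nat.factorial (k i) : ℝ) = (k i : ℝ) * (Nat.factorial (k' i) : ℝ) := by
    rw [hk'i]
    obtain ⟨m, hm⟩ : ∃ m, k i = m + 1 := ⟨k i - 1, by omega⟩
    rw [hm]
    simp only [Nat.add_sub_cancel, Nat.factorial_succ]
    push_cast
    ring
  rw [h2]
  ring

lemma confC_single {I : Type*} [Fintype I] [DecidableEq I] (i : I) :
    confC (Pi.single i 1 : I → ℕ) = 1 := by
  unfold confC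
  apply Finset.prod_eq_one
  intro j _
  rcases eq_or_ne j i with rfl | hji
  · simp
  · rw [Pi.single_eq_of_ne hji]
    simp

lemma sum_cast_single {I : Type*} [Fintype I] [DecidableEq I] (i : I) (g : I → ℝ) :
    ∑ l, (((Pi.single i 1 : I → ℕ) l : ℝ)) * g l = g i := by
  rw [Finset.sum_eq_single i]
  · simp
  · intro j _ hji
    rw [Pi.single_eq_of_ne hji]
    simp
  · simp

/-- The exponent defect `ξ` tends to 0 for every `k ∈ K`. -/
lemma xi_tendsto {I : Type*} [Fintype I] [DecidableEq I]
    (Kbar : Finset (I → ℕ))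
    (h0 : (0 : I → ℕ) ∈ Kbar)
    (hunit : ∀ i : I, Pi.single i 1 ∈ Kbar)
    (hmono : ∀ k ∈ Kbar, ∀ k' : I → ℕ, (∀ i, k' i ≤ k i) → k' ∈ Kbar)
    (a : ℕ → ℝ) (hapos : ∀ n, 0 < a n)
    (xo : ℕ → (I → ℕ) → ℝ)
    (hpos : ∀ n, ∀ k ∈ Kbar.erase 0, 0 < xo n k)
    (hchi : ∀ i : I, ∀ k k' : I → ℕ, isEdge Kbar k i → isEdge Kbar k' i →
      Tendsto (fun n => chiDef (a n) (xo n) k k' i) atTop (nhds 0)) :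
    ∀ k ∈ Kbar.erase 0,
      Tendsto (fun n => Real.log (xo n k) + Real.log (confC k)
        + (((∑ i, k i : ℕ) : ℝ) - 1) * Real.log (a n)
        - ∑ i, ((k i : ℝ)) * Real.log (xo n (Pi.single i 1))) atTop (nhds 0) := by
  classical
  have heK : ∀ i : I, Pi.single i 1 ∈ Kbar.erase 0 :=
    fun i => Finset.mem_erase.2 ⟨single_ne_zero' i, hunit i⟩
  have main : ∀ m : ℕ, ∀ k ∈ Kbar.erase 0, (∑ i, k i) = m →
      Tendsto (fun n => Real.log (xo n k) + Real.log (confC k)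
        + (((∑ i, k i : ℕ) : ℝ) - 1) * Real.log (a n)
        - ∑ i, ((k i : ℝ)) * Real.log (xo n (Pi.single i 1))) atTop (nhds 0) := by
    intro m
    induction m using Nat.strong_induction_on with
    | _ m ih =>
      intro k hkK hsum
      have hk0 : k ≠ 0 := (Finset.mem_erase.1 hkK).1
      have hkbar : k ∈ Kbar := (Finset.mem_erase.1 hkK).2
      obtain ⟨i, hki⟩ : ∃ i, 1 ≤ k i := by
        by_contra h
        push_neg at h
        exact hk0 (funext fun j => by have := h j; simp only [Pi.zero_apply]; omega)
      have hm1 : 1 ≤ m := by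
        rw [← hsum]
        calc 1 ≤ k i := hki
          _ ≤ ∑ j, k j := Finset.single_le_sum (fun j _ => Nat.zero_le _) (Finset.mem_univ i)
      rcases eq_or_lt_of_le hm1 with hm | hm
      · -- base case : k = e_i
        have hkalli : k = Pi.single i 1 := by
          funext j
          rcases eq_or_ne j i with rfl | hji
          · rw [Pi.single_eq_same]
            have h1 : k j ≤ ∑ l, k l :=
              Finset.single_le_sum (fun l _ => Nat.zero_le _) (Finset.mem_univ j)
            omega
          · rw [Pi.single_eq_of_ne hji]
            have h2 : k j + k i ≤ ∑ l, k l := by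
              rw [← Finset.sum_erase_add _ _ (Finset.mem_univ i)]
              have : k j ≤ ∑ l ∈ Finset.univ.erase i, k l :=
                Finset.single_le_sum (fun l _ => Nat.zero_le _)
                  (Finset.mem_erase.2 ⟨hji, Finset.mem_univ j⟩)
              omega
            omega
        subst hkalli
        have hconst : (fun n => Real.log (xo n (Pi.single i 1)) + Real.log (confC (Pi.single i 1 : I → ℕ))
            + (((∑ l, (Pi.single i 1 : I → ℕ) l : ℕ) : ℝ) - 1) * Real.log (a n)
            - ∑ l, (((Pi.single i 1 : I → ℕ) l : ℝ)) * Real.log (xo n (Pi.single l 1)))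
            = fun _ => (0:ℝ) := by
          funext n
          rw [confC_single, sum_single_one, sum_cast_single i (fun l => Real.log (xo n (Pi.single l 1)))]
          simp
        rw [hconst]
        exact tendsto_const_nhds
      · -- inductive step
        set k' : I → ℕ := k - Pi.single i 1 with hk'def
        have hk'le : ∀ j, k' j ≤ k j := fun j => Nat.sub_le _ _
        have hk'sum : (∑ j, k' j) = m - 1 := by
          rw [hk'def, sum_sub_single k i hki, hsum]
        have hk'0 : k' ≠ 0 := by
          intro h
          rw [h] at hk'sum
          simp at hk'sum
          omega
        have hk'bar : k' ∈ Kbar := hmono k hkbar k' hk'le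
        have hk'K : k' ∈ Kbar.erase 0 := Finset.mem_erase.2 ⟨hk'0, hk'bar⟩
        have hedgek : isEdge Kbar k i := ⟨hkK, hki, hk'bar⟩
        have hedgee : isEdge Kbar (Pi.single i 1) i := by
          refine ⟨heK i, by simp, ?_⟩
          rw [single_sub_single]
          exact h0
        have hchi' := hchi i k (Pi.single i 1) hedgek hedgee
        have ihk' := ih (m - 1) (by omega) k' hk'K hk'sum
        have hkicast : ((k i : ℝ)) ≠ 0 := by
          have : (0:ℝ) < (k i : ℝ) := by exact_mod_cast hki
          exact this.ne'
        have key : ∀ n, Real.log (xo n k) + Real.log (confC k)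
            + (((∑ j, k j : ℕ) : ℝ) - 1) * Real.log (a n)
            - ∑ j, ((k j : ℝ)) * Real.log (xo n (Pi.single j 1))
            = (Real.log (xo n k') + Real.log (confC k')
              + (((∑ j, k' j : ℕ) : ℝ) - 1) * Real.log (a n)
              - ∑ j, ((k' j : ℝ)) * Real.log (xo n (Pi.single j 1)))
              - chiDef (a n) (xo n) k (Pi.single i 1) i := by
          intro n
          have hz : 0 < xo n (Pi.single i 1) := hpos n _ (heK i)
          have hx : 0 < xo n k := hpos n k hkK
          have hx' : 0 < xo n k' := hpos n k' hk'K
          have hchi_eq : chiDef (a n) (xo n) k (Pi.single i 1) i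
              = Real.log (xo n k') + Real.log (xo n (Pi.single i 1))
                - (Real.log ((k i : ℝ)) + Real.log (xo n k) + Real.log (a n)) := by
            unfold chiDef xeDef
            rw [single_sub_single]
            rw [if_pos rfl, if_neg hk'0, if_neg (single_ne_zero' i), if_neg hk0]
            rw [Pi.single_eq_same]
            push_cast
            rw [one_mul]
            rw [Real.log_mul hx'.ne' hz.ne']
            rw [Real.log_mul (mul_ne_zero hkicast hx.ne') (hapos n).ne']
            rw [Real.log_mul hkicast hx.ne']
          have hlogc : Real.log (confC k) = Real.log ((k i : ℝ)) + Real.log (confC k') := by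
            rw [confC_succ k i hki, Real.log_mul hkicast (confC_pos k').ne']
          have hsums : ∑ j, ((k' j : ℝ)) * Real.log (xo n (Pi.single j 1))
              = (∑ j, ((k j : ℝ)) * Real.log (xo n (Pi.single j 1)))
                - Real.log (xo n (Pi.single i 1)) :=
            sum_cast_sub_single k i hki _
          have hcastm : (((∑ j, k' j : ℕ)) : ℝ) = (((∑ j, k j : ℕ)) : ℝ) - 1 := by
            rw [hk'sum, hsum]
            have : 1 ≤ m := hm1
            push_cast [Nat.cast_sub this]
            ring
          rw [hchi_eq, hlogc, hsums, hcastm]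
          ring
        have : Tendsto (fun n =>
            (Real.log (xo n k') + Real.log (confC k')
              + (((∑ j, k' j : ℕ) : ℝ) - 1) * Real.log (a n)
              - ∑ j, ((k' j : ℝ)) * Real.log (xo n (Pi.single j 1)))
              - chiDef (a n) (xo n) k (Pi.single i 1) i) atTop (nhds 0) := by
          have := ihk'.sub hchi'
          simpa using this
        exact this.congr (fun n => (key n).symm)
  intro k hk
  exact main (∑ i, k i) k hk rfl

lemma F_bound {I : Type*} [Fintype I] [DecidableEq I]
    (Kbar : Finset (I → ℕ)) (a B : ℝ) (ha : 0 < a) (hB : 1 ≤ B)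
    (x : (I → ℕ) → ℝ) (hx : ∀ k ∈ Kbar.erase 0, 0 ≤ x k ∧ x k ≤ B) :
    |(∑ k ∈ Kbar.erase 0, x k * Real.log (x k * confC k / (Real.exp 1 * a)))
      - (-Real.log a) * ∑ k ∈ Kbar.erase 0, x k| ≤
    ∑ k ∈ Kbar.erase 0, (1 + (B * confC k) * Real.log (B * confC k) + B) := by
  rw [Finset.mul_sum, ← Finset.sum_sub_distrib]
  apply (Finset.abs_sum_le_sum_abs _ _).trans
  apply Finset.sum_le_sum
  intro k hk
  exact xlogxc_term_bound hB (confC_one_le k) ha (hx k hk).1 (hx k hk).2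

lemma sum_mul_linear {I : Type*} [Fintype I] [DecidableEq I]
    (K : Finset (I → ℕ)) (g : I → ℝ) (d : (I → ℕ) → ℝ) :
    ∑ k ∈ K, (∑ i, ((k i : ℝ)) * g i) * d k = ∑ i, g i * (∑ k ∈ K, ((k i : ℝ)) * d k) := by
  have h1 : ∀ k ∈ K, (∑ i, ((k i : ℝ)) * g i) * d k = ∑ i, g i * (((k i : ℝ)) * d k) := by
    intro k _
    rw [Finset.sum_mul]
    apply Finset.sum_congr rfl
    intro i _; ring
  rw [Finset.sum_congr rfl h1, Finset.sum_comm]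
  apply Finset.sum_congr rfl
  intro i _
  rw [Finset.mul_sum]

set_option maxHeartbeats 2000000 in
/-- Lemma `lem-close-to-opt`: along a sequence `r → ∞` with
`a = r^{p−1}`, if `x^{◦,a}` has positive coordinates, nearly satisfies the conservation
laws, and `χ_{k,k',i}(x^{◦,a}) → 0` for every pair of edges, then
`L^(a)(x^{◦,a}) → L*`. -/
theorem L_tendsto_LPvalue
    {I : Type*} [Fintype I] [DecidableEq I] [Nonempty I]
    (Kbar : Finset (I → ℕ))
    (h0 : (0 : I → ℕ) ∈ Kbar)
    (hunit : ∀ i : I, Pi.single i 1 ∈ Kbar)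
    (hmono : ∀ k ∈ Kbar, ∀ k' : I → ℕ, (∀ i, k' i ≤ k i) → k' ∈ Kbar)
    (ρ : I → ℝ) (hρ : ∀ i, 0 < ρ i)
    (p ε : ℝ) (hp : p ∈ Set.Ioo (0 : ℝ) 1) (hε : ε ∈ Set.Ioo (0 : ℝ) (1/2))
    (r : ℕ → ℝ) (hr1 : ∀ n, 1 ≤ r n) (hrtop : Tendsto r atTop atTop)
    (a : ℕ → ℝ) (ha : ∀ n, a n = r n ^ (p - 1))
    (xo : ℕ → (I → ℕ) → ℝ)
    (hpos : ∀ n, ∀ k ∈ Kbar.erase 0, 0 < xo n k)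
    (hcons : ∀ᶠ n in atTop, ∀ i : I,
      |∑ k ∈ Kbar.erase 0, (k i : ℝ) * xo n k - ρ i| ≤
        r n ^ (-(1 : ℝ)/2 + ε) / (Fintype.card I : ℝ))
    (hchi : ∀ i : I, ∀ k k' : I → ℕ, isEdge Kbar k i → isEdge Kbar k' i →
      Tendsto (fun n => chiDef (a n) (xo n) k k' i) atTop (nhds 0)) :
    Tendsto (fun n => Lfun Kbar (a n) (xo n)) atTop (nhds (LPvalue Kbar ρ)) := by
  classical
  obtain ⟨hp0, hp1⟩ := hp
  obtain ⟨hε0, hε1⟩ := hε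
  have hrpos : ∀ n, 0 < r n := fun n => lt_of_lt_of_le one_pos (hr1 n)
  have hapos : ∀ n, 0 < a n := fun n => by rw [ha n]; exact Real.rpow_pos_of_pos (hrpos n) _
  have hloga : ∀ n, Real.log (a n) = (p - 1) * Real.log (r n) := fun n => by
    rw [ha n, Real.log_rpow (hrpos n)]
  have hbtop : Tendsto (fun n => -Real.log (a n)) atTop atTop := by
    have hlog : Tendsto (fun n => Real.log (r n)) atTop atTop :=
      Real.tendsto_log_atTop.comp hrtop
    have h2 := hlog.const_mul_atTop (show (0:ℝ) < 1 - p by linarith)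
    apply h2.congr
    intro n
    rw [hloga n]; ring
  have hηpos : ∀ n, 0 < r n ^ (-(1:ℝ)/2 + ε) := fun n => Real.rpow_pos_of_pos (hrpos n) _
  have hηlim : Tendsto (fun n => r n ^ (-(1:ℝ)/2 + ε)) atTop (nhds 0) := by
    have h1 : Tendsto (fun x : ℝ => x ^ (-((1:ℝ)/2 - ε))) atTop (nhds 0) :=
      tendsto_rpow_neg_atTop (by linarith)
    have h2 : Tendsto (fun n => r n ^ (-((1:ℝ)/2 - ε))) atTop (nhds 0) := h1.comp hrtop
    apply h2.congr
    intro n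
    congr 1
    ring
  -- basic constants
  have hcard1 : (1:ℝ) ≤ (Fintype.card I : ℝ) := by
    exact_mod_cast Nat.one_le_iff_ne_zero.2 Fintype.card_ne_zero
  set B : ℝ := (∑ i, ρ i) + 1 with hBdef
  have hρB : ∀ i, ρ i + 1 ≤ B := by
    intro i
    have : ρ i ≤ ∑ j, ρ j := Finset.single_le_sum (fun j _ => (hρ j).le) (Finset.mem_univ i)
    rw [hBdef]; linarith
  have hB1 : (1:ℝ) ≤ B := by
    have : 0 ≤ ∑ i, ρ i := Finset.sum_nonneg fun i _ => (hρ i).le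
    rw [hBdef]; linarith
  set δ : ℝ := Finset.univ.inf' Finset.univ_nonempty ρ with hδdef
  have hδpos : 0 < δ := by
    rw [hδdef, Finset.lt_inf'_iff]
    exact fun i _ => hρ i
  have hδle : ∀ i, δ ≤ ρ i := fun i => Finset.inf'_le ρ (Finset.mem_univ i)
  set C : ℝ := ∑ k ∈ Kbar.erase 0, (1 + (B * confC k) * Real.log (B * confC k) + B) with hCdef
  have hC0 : 0 ≤ C := by
    apply Finset.sum_nonneg
    intro k _
    have h1 : (1:ℝ) ≤ B * confC k := by
      calc (1:ℝ) = 1 * 1 := by ring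
        _ ≤ B * confC k := mul_le_mul hB1 (confC_one_le k) zero_le_one (by linarith)
    have h2 : 0 ≤ Real.log (B * confC k) := Real.log_nonneg h1
    nlinarith
  -- ξ convergence
  have hxi := xi_tendsto Kbar h0 hunit hmono a hapos xo hpos hchi
  have hΞ : Tendsto (fun n => ∑ k ∈ Kbar.erase 0, |Real.log (xo n k) + Real.log (confC k)
      + (((∑ i, k i : ℕ) : ℝ) - 1) * Real.log (a n)
      - ∑ i, ((k i : ℝ)) * Real.log (xo n (Pi.single i 1))|) atTop (nhds 0) := by
    have h1 : Tendsto (fun n => ∑ k ∈ Kbar.erase 0, |Real.log (xo n k) + Real.log (confC k)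
        + (((∑ i, k i : ℕ) : ℝ) - 1) * Real.log (a n)
        - ∑ i, ((k i : ℝ)) * Real.log (xo n (Pi.single i 1))|) atTop
        (nhds (∑ k ∈ Kbar.erase 0, |(0:ℝ)|)) := by
      apply tendsto_finset_sum
      intro k hk
      exact (hxi k hk).abs
    simpa using h1
  -- the LP feasible set
  set S : Set ℝ := {v : ℝ | ∃ x : (I → ℕ) → ℝ,
    ((∀ k ∈ Kbar.erase 0, 0 ≤ x k) ∧
      ∀ i : I, ∑ k ∈ Kbar.erase 0, (k i : ℝ) * x k = ρ i) ∧
    v = ∑ k ∈ Kbar.erase 0, x k} with hSdef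
  have hLPS : LPvalue Kbar ρ = sInf S := rfl
  have hSbdd : BddBelow S := by
    refine ⟨0, ?_⟩
    rintro v ⟨x, ⟨hx0, _⟩, rfl⟩
    exact Finset.sum_nonneg hx0
  have hSne : S.Nonempty := by
    obtain ⟨y, hy0, hyld, _⟩ := boost_thin_lemma Kbar hunit hmono (fun _ => 0)
      (fun k _ => le_refl 0) ρ hρ
    exact ⟨∑ k ∈ Kbar.erase 0, y k, y, ⟨hy0, hyld⟩, rfl⟩
  have hLP0 : 0 ≤ sInf S := le_csInf hSne (by rintro v ⟨x, ⟨hx0, _⟩, rfl⟩; exact Finset.sum_nonneg hx0)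
  -- main convergence
  rw [Metric.tendsto_nhds]
  intro ε0 hε00
  -- near-optimal LP solution
  obtain ⟨v, hvS, hvlt⟩ := Real.lt_sInf_add_pos hSne (show 0 < ε0/4 by linarith)
  obtain ⟨xstar, ⟨hxs0, hxsld⟩, hveq⟩ := hvS
  have hxstar_sum : ∑ k ∈ Kbar.erase 0, xstar k < sInf S + ε0/4 := by rw [← hveq]; exact hvlt
  have hxstarB : ∀ k ∈ Kbar.erase 0, xstar k ≤ B := by
    intro k hk
    obtain ⟨i, hki⟩ : ∃ i, 1 ≤ k i := by
      by_contra h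
      push_neg at h
      exact (Finset.mem_erase.1 hk).1 (funext fun j => by have := h j; simp only [Pi.zero_apply]; omega)
    calc xstar k ≤ ((k i : ℝ)) * xstar k := by
          have h1 : (1:ℝ) ≤ ((k i : ℝ)) := by exact_mod_cast hki
          nlinarith [hxs0 k hk]
      _ ≤ ∑ k' ∈ Kbar.erase 0, ((k' i : ℝ)) * xstar k' :=
          Finset.single_le_sum (f := fun k' => ((k' i : ℝ)) * xstar k')
            (fun k' hk' => mul_nonneg (Nat.cast_nonneg _) (hxs0 k' hk')) hk
      _ = ρ i := hxsld i
      _ ≤ B := by linarith [hρB i]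
  -- the good event
  have hev1 : ∀ᶠ n in atTop, r n ^ (-(1:ℝ)/2 + ε) < min 1 (δ/2) :=
    hηlim.eventually_lt_const (by positivity)
  have hev2 : ∀ᶠ n in atTop, (1:ℝ) ≤ -Real.log (a n) := hbtop.eventually (eventually_ge_atTop 1)
  have hev3 : ∀ᶠ n in atTop, (fun n => C / (-Real.log (a n))) n < ε0/8 := by
    have h1 : Tendsto (fun n => C / (-Real.log (a n))) atTop (nhds 0) := by
      have := hbtop.inv_tendsto_atTop
      have h2 := this.const_mul C
      simp only [mul_zero] at h2
      apply h2.congr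
      intro n
      simp [Pi.inv_apply, div_eq_mul_inv]
    exact h1.eventually_lt_const (by linarith)
  have hev4 : ∀ᶠ n in atTop, B * (∑ k ∈ Kbar.erase 0, |Real.log (xo n k) + Real.log (confC k)
      + (((∑ i, k i : ℕ) : ℝ) - 1) * Real.log (a n)
      - ∑ i, ((k i : ℝ)) * Real.log (xo n (Pi.single i 1))|) < ε0/8 := by
    have h1 := hΞ.const_mul B
    simp only [mul_zero] at h1
    exact h1.eventually_lt_const (by linarith)
  have hev5 : ∀ᶠ n in atTop, r n ^ (-(1:ℝ)/2 + ε) < ε0/8 :=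
    hηlim.eventually_lt_const (by linarith)
  filter_upwards [hcons, hev1, hev2, hev3, hev4, hev5] with n hcons_n hη_n hb_n hCb_n hΞ_n hη8_n
  -- per-n notation
  set η := r n ^ (-(1:ℝ)/2 + ε)
  set bn := -Real.log (a n) with hbn
  have hbpos : 0 < bn := lt_of_lt_of_le one_pos hb_n
  set sn : I → ℝ := fun i => ∑ k ∈ Kbar.erase 0, ((k i : ℝ)) * xo n k with hsn
  have hsB : ∀ i, sn i ≤ B := by
    intro i
    have h1 := (abs_le.1 (hcons_n i)).2
    have h2 : η / (Fintype.card I : ℝ) ≤ η := div_le_self (hηpos n).le hcard1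
    have h3 : η ≤ 1 := le_of_lt (lt_of_lt_of_le hη_n (min_le_left _ _))
    have := hρB i
    simp only [hsn]
    linarith
  have hsδ : ∀ i, δ/2 ≤ sn i := by
    intro i
    have h1 := (abs_le.1 (hcons_n i)).1
    have h2 : η / (Fintype.card I : ℝ) ≤ η := div_le_self (hηpos n).le hcard1
    have h3 : η ≤ δ/2 := le_of_lt (lt_of_lt_of_le hη_n (min_le_right _ _))
    have := hδle i
    simp only [hsn]
    linarith
  have hspos : ∀ i, 0 < sn i := fun i => lt_of_lt_of_le (by linarith) (hsδ i)
  have hxB : ∀ k ∈ Kbar.erase 0, xo n k ≤ B := by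
    intro k hk
    obtain ⟨i, hki⟩ : ∃ i, 1 ≤ k i := by
      by_contra h
      push_neg at h
      exact (Finset.mem_erase.1 hk).1 (funext fun j => by have := h j; simp only [Pi.zero_apply]; omega)
    calc xo n k ≤ ((k i : ℝ)) * xo n k := by
          have h1 : (1:ℝ) ≤ ((k i : ℝ)) := by exact_mod_cast hki
          nlinarith [(hpos n k hk).le]
      _ ≤ sn i :=
          Finset.single_le_sum (f := fun k' => ((k' i : ℝ)) * xo n k')
            (fun k' hk' => mul_nonneg (Nat.cast_nonneg _) (hpos n k' hk').le) hk
      _ ≤ B := hsB i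
  have hmax_bound : ∀ (τ σ : I → ℝ), (∀ i, |τ i - σ i| ≤ η / (Fintype.card I : ℝ)) →
      ∑ i, max (τ i - σ i) 0 ≤ η := by
    intro τ σ hτ
    calc ∑ i, max (τ i - σ i) 0 ≤ ∑ _i : I, η / (Fintype.card I : ℝ) := by
          apply Finset.sum_le_sum
          intro i _
          apply max_le ((abs_le.1 (hτ i)).2) (div_nonneg (hηpos n).le (by positivity))
      _ = (Fintype.card I : ℝ) * (η / (Fintype.card I : ℝ)) := by
          rw [Finset.sum_const, Finset.card_univ, nsmul_eq_mul]
      _ = η := by field_simp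
  -- LOWER BOUND : sInf S ≤ Σ xo + η
  have hlow : sInf S ≤ ∑ k ∈ Kbar.erase 0, xo n k + η := by
    obtain ⟨y, hy0, hyld, hyle⟩ := boost_thin_lemma Kbar hunit hmono (xo n)
      (fun k hk => (hpos n k hk).le) ρ hρ
    have h1 : sInf S ≤ ∑ k ∈ Kbar.erase 0, y k :=
      csInf_le hSbdd ⟨y, ⟨hy0, hyld⟩, rfl⟩
    have h2 : ∑ i, max (ρ i - sn i) 0 ≤ η := by
      apply hmax_bound
      intro i
      rw [abs_sub_comm]
      exact hcons_n i
    have h3 := hyle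
    replace h3 : ∑ k ∈ Kbar.erase 0, y k ≤ ∑ k ∈ Kbar.erase 0, xo n k + ∑ i, max (ρ i - sn i) 0 := h3
    linarith
  -- F decomposition for xo n
  have hFx := F_bound Kbar (a n) B (hapos n) hB1 (xo n)
    (fun k hk => ⟨(hpos n k hk).le, hxB k hk⟩)
  rw [← hCdef] at hFx
  -- Lfun in terms of F
  have hLfun : Lfun Kbar (a n) (xo n)
      = (∑ k ∈ Kbar.erase 0, xo n k * Real.log (xo n k * confC k / (Real.exp 1 * a n))) / bn := by
    unfold Lfun
    have hlan : Real.log (a n) = -bn := by rw [hbn]; ring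
    rw [hlan]
    ring
  -- UPPER BOUND construction
  obtain ⟨y, hy0, hyld, hyle⟩ := boost_thin_lemma Kbar hunit hmono xstar hxs0 sn hspos
  have hyB : ∀ k ∈ Kbar.erase 0, y k ≤ B := by
    intro k hk
    obtain ⟨i, hki⟩ : ∃ i, 1 ≤ k i := by
      by_contra h
      push_neg at h
      exact (Finset.mem_erase.1 hk).1 (funext fun j => by have := h j; simp only [Pi.zero_apply]; omega)
    calc y k ≤ ((k i : ℝ)) * y k := by
          have h1 : (1:ℝ) ≤ ((k i : ℝ)) := by exact_mod_cast hki
          nlinarith [hy0 k hk]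
      _ ≤ ∑ k' ∈ Kbar.erase 0, ((k' i : ℝ)) * y k' :=
          Finset.single_le_sum (f := fun k' => ((k' i : ℝ)) * y k')
            (fun k' hk' => mul_nonneg (Nat.cast_nonneg _) (hy0 k' hk')) hk
      _ = sn i := hyld i
      _ ≤ B := hsB i
  have hysum : ∑ k ∈ Kbar.erase 0, y k ≤ ∑ k ∈ Kbar.erase 0, xstar k + η := by
    have h2 : ∑ i, max (sn i - ρ i) 0 ≤ η := by
      apply hmax_bound
      intro i
      exact hcons_n i
    have h3 := hyle
    simp only [hxsld] at h3
    linarith [h3, h2]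
  -- convexity inequality summed
  have hconv : (∑ k ∈ Kbar.erase 0, xo n k * Real.log (xo n k * confC k / (Real.exp 1 * a n)))
      + ∑ k ∈ Kbar.erase 0, Real.log (xo n k * confC k / a n) * (y k - xo n k)
      ≤ ∑ k ∈ Kbar.erase 0, y k * Real.log (y k * confC k / (Real.exp 1 * a n)) := by
    rw [← Finset.sum_add_distrib]
    apply Finset.sum_le_sum
    intro k hk
    exact conv_ineq (confC_pos k) (hapos n) (hpos n k hk) (hy0 k hk)
  -- gradient identity
  have hgrad : ∀ k ∈ Kbar.erase 0, Real.log (xo n k * confC k / a n)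
      = (Real.log (xo n k) + Real.log (confC k)
        + (((∑ i, k i : ℕ) : ℝ) - 1) * Real.log (a n)
        - ∑ i, ((k i : ℝ)) * Real.log (xo n (Pi.single i 1)))
      + ∑ i, ((k i : ℝ)) * (Real.log (xo n (Pi.single i 1)) - Real.log (a n)) := by
    intro k hk
    have hx := hpos n k hk
    rw [Real.log_div (mul_ne_zero hx.ne' (confC_pos k).ne') (hapos n).ne',
      Real.log_mul hx.ne' (confC_pos k).ne']
    have h1 : ∑ i, ((k i : ℝ)) * (Real.log (xo n (Pi.single i 1)) - Real.log (a n))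
        = (∑ i, ((k i : ℝ)) * Real.log (xo n (Pi.single i 1)))
          - (((∑ i, k i : ℕ) : ℝ)) * Real.log (a n) := by
      have h2 : (((∑ i, k i : ℕ) : ℝ)) = ∑ i, ((k i : ℝ)) := by push_cast; rfl
      calc ∑ i, ((k i : ℝ)) * (Real.log (xo n (Pi.single i 1)) - Real.log (a n))
          = ∑ i, (((k i : ℝ)) * Real.log (xo n (Pi.single i 1)) - ((k i : ℝ)) * Real.log (a n)) :=
            Finset.sum_congr rfl fun i _ => by ring
        _ = (∑ i, ((k i : ℝ)) * Real.log (xo n (Pi.single i 1)))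
            - ∑ i, ((k i : ℝ)) * Real.log (a n) := Finset.sum_sub_distrib _ _
        _ = (∑ i, ((k i : ℝ)) * Real.log (xo n (Pi.single i 1)))
            - (((∑ i, k i : ℕ) : ℝ)) * Real.log (a n) := by
            rw [← Finset.sum_mul, h2]
    rw [h1]
    ring
  -- the gradient term sum
  have hgradsum : ∑ k ∈ Kbar.erase 0, Real.log (xo n k * confC k / a n) * (y k - xo n k)
      = ∑ k ∈ Kbar.erase 0, (Real.log (xo n k) + Real.log (confC k)
        + (((∑ i, k i : ℕ) : ℝ) - 1) * Real.log (a n)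
        - ∑ i, ((k i : ℝ)) * Real.log (xo n (Pi.single i 1))) * (y k - xo n k) := by
    have key : ∑ k ∈ Kbar.erase 0,
        (∑ i, ((k i : ℝ)) * (Real.log (xo n (Pi.single i 1)) - Real.log (a n))) * (y k - xo n k)
        = 0 := by
      rw [sum_mul_linear]
      apply Finset.sum_eq_zero
      intro i _
      have h2 : ∑ k ∈ Kbar.erase 0, ((k i : ℝ)) * (y k - xo n k) = 0 := by
        have h3 : ∀ k ∈ Kbar.erase 0, ((k i : ℝ)) * (y k - xo n k)
            = ((k i : ℝ)) * y k - ((k i : ℝ)) * xo n k := fun k _ => by ring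
        rw [Finset.sum_congr rfl h3, Finset.sum_sub_distrib, hyld i]
        simp only [hsn]
        ring
      rw [h2, mul_zero]
    calc ∑ k ∈ Kbar.erase 0, Real.log (xo n k * confC k / a n) * (y k - xo n k)
        = ∑ k ∈ Kbar.erase 0, ((Real.log (xo n k) + Real.log (confC k)
            + (((∑ i, k i : ℕ) : ℝ) - 1) * Real.log (a n)
            - ∑ i, ((k i : ℝ)) * Real.log (xo n (Pi.single i 1))) * (y k - xo n k)
          + (∑ i, ((k i : ℝ)) * (Real.log (xo n (Pi.single i 1)) - Real.log (a n))) * (y k - xo n k)) := by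
          apply Finset.sum_congr rfl
          intro k hk
          rw [hgrad k hk]
          ring
      _ = _ := by
          rw [Finset.sum_add_distrib, key, add_zero]
  -- bound the ξ-error term
  have hxier : |∑ k ∈ Kbar.erase 0, (Real.log (xo n k) + Real.log (confC k)
      + (((∑ i, k i : ℕ) : ℝ) - 1) * Real.log (a n)
      - ∑ i, ((k i : ℝ)) * Real.log (xo n (Pi.single i 1))) * (y k - xo n k)|
      ≤ B * (∑ k ∈ Kbar.erase 0, |Real.log (xo n k) + Real.log (confC k)
        + (((∑ i, k i : ℕ) : ℝ) - 1) * Real.log (a n)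
        - ∑ i, ((k i : ℝ)) * Real.log (xo n (Pi.single i 1))|) := by
    apply (Finset.abs_sum_le_sum_abs _ _).trans
    rw [Finset.mul_sum]
    apply Finset.sum_le_sum
    intro k hk
    have hy0' := hy0 k hk
    have hyB' := hyB k hk
    have hx0' := (hpos n k hk).le
    have hxB' := hxB k hk
    have hdB : |y k - xo n k| ≤ B := abs_le.2 ⟨by linarith, by linarith⟩
    calc |(Real.log (xo n k) + Real.log (confC k)
          + (((∑ i, k i : ℕ) : ℝ) - 1) * Real.log (a n)
          - ∑ i, ((k i : ℝ)) * Real.log (xo n (Pi.single i 1))) * (y k - xo n k)|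
        = |Real.log (xo n k) + Real.log (confC k)
          + (((∑ i, k i : ℕ) : ℝ) - 1) * Real.log (a n)
          - ∑ i, ((k i : ℝ)) * Real.log (xo n (Pi.single i 1))| * |y k - xo n k| := abs_mul _ _
      _ ≤ |Real.log (xo n k) + Real.log (confC k)
          + (((∑ i, k i : ℕ) : ℝ) - 1) * Real.log (a n)
          - ∑ i, ((k i : ℝ)) * Real.log (xo n (Pi.single i 1))| * B :=
          mul_le_mul_of_nonneg_left hdB (abs_nonneg _)
      _ = B * |Real.log (xo n k) + Real.log (confC k)
          + (((∑ i, k i : ℕ) : ℝ) - 1) * Real.log (a n)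
          - ∑ i, ((k i : ℝ)) * Real.log (xo n (Pi.single i 1))| := mul_comm _ _
  -- F bound for y
  have hFy := F_bound Kbar (a n) B (hapos n) hB1 y (fun k hk => ⟨hy0 k hk, hyB k hk⟩)
  rw [← hCdef] at hFy
  -- put together : upper bound on Lfun
  have hub : Lfun Kbar (a n) (xo n) ≤ sInf S + ε0/4 + η + C / bn
      + B * (∑ k ∈ Kbar.erase 0, |Real.log (xo n k) + Real.log (confC k)
        + (((∑ i, k i : ℕ) : ℝ) - 1) * Real.log (a n)
        - ∑ i, ((k i : ℝ)) * Real.log (xo n (Pi.single i 1))|) := by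
    set Ξ := ∑ k ∈ Kbar.erase 0, |Real.log (xo n k) + Real.log (confC k)
        + (((∑ i, k i : ℕ) : ℝ) - 1) * Real.log (a n)
        - ∑ i, ((k i : ℝ)) * Real.log (xo n (Pi.single i 1))|
    set Fx := ∑ k ∈ Kbar.erase 0, xo n k * Real.log (xo n k * confC k / (Real.exp 1 * a n))
    set Fy := ∑ k ∈ Kbar.erase 0, y k * Real.log (y k * confC k / (Real.exp 1 * a n))
    have h1 : Fx ≤ Fy + B * Ξ := by
      have h2 := hconv
      rw [hgradsum] at h2
      have h3 := (abs_le.1 hxier).1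
      linarith
    have h4 : Fy ≤ bn * (∑ k ∈ Kbar.erase 0, y k) + C := by
      have h6 := (abs_le.1 hFy).2
      rw [← hbn] at h6
      linarith
    have h5 : ∑ k ∈ Kbar.erase 0, y k ≤ sInf S + ε0/4 + η := by linarith [hysum, hxstar_sum]
    rw [hLfun]
    rw [div_le_iff₀ hbpos]
    have hBΞ : 0 ≤ B * Ξ := mul_nonneg (by linarith)
      (Finset.sum_nonneg fun k _ => abs_nonneg _)
    have hCbn : 0 ≤ C / bn := div_nonneg hC0 hbpos.le
    calc Fx ≤ bn * (∑ k ∈ Kbar.erase 0, y k) + C + B * Ξ := by linarith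
      _ ≤ bn * (sInf S + ε0/4 + η) + C + B * Ξ := by nlinarith
      _ ≤ (sInf S + ε0/4 + η + C / bn + B * Ξ) * bn := by
          have hb1 : B * Ξ ≤ (B * Ξ) * bn := le_mul_of_one_le_right hBΞ hb_n
          have hexp : (sInf S + ε0/4 + η + C / bn + B * Ξ) * bn
              = bn * (sInf S + ε0/4 + η) + (C / bn) * bn + (B * Ξ) * bn := by ring
          rw [hexp, div_mul_cancel₀ _ hbpos.ne']
          have hb2 : bn * (sInf S + ε0/4 + η) + C + B * Ξ
              ≤ bn * (sInf S + ε0/4 + η) + C + (B * Ξ) * bn := by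
            exact add_le_add_right hb1 _
          linarith [hb2]
  -- lower bound on Lfun
  have hlb : sInf S - η - C / bn ≤ Lfun Kbar (a n) (xo n) := by
    have h1 := (abs_le.1 hFx).1
    rw [← hbn] at h1
    rw [hLfun, le_div_iff₀ hbpos]
    have h2 : sInf S - η ≤ ∑ k ∈ Kbar.erase 0, xo n k := by linarith [hlow]
    calc (sInf S - η - C / bn) * bn = (sInf S - η) * bn - (C / bn) * bn := by ring
      _ = (sInf S - η) * bn - C := by rw [div_mul_cancel₀ _ hbpos.ne']
      _ ≤ (∑ k ∈ Kbar.erase 0, xo n k) * bn - C := by nlinarith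
      _ ≤ ∑ k ∈ Kbar.erase 0, xo n k * Real.log (xo n k * confC k / (Real.exp 1 * a n)) := by
          nlinarith [h1]
  -- conclude
  rw [hLPS, Real.dist_eq, abs_lt]
  have hηb : η < ε0/8 := hη8_n
  have hCb : C / bn < ε0/8 := hCb_n
  have hΞb := hΞ_n
  constructor
  · linarith
  · linarith
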